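/- Let q ≥ 3 and n ≥ 2. If there exists a nonempty spherical bitrade in the Hamming graph H(n,q), then q divides n. If there exists a nonempty perfect bitrade in H(n,q), then n ≡ 1 (mod q). -/

import Mathlib

open scoped BigOperators

/-- The ball of radius 1 centered at `x` in a graph `G`. -/
def ball1 {V : Type*} (G : SimpleGraph V) (x : V) : Set V := {y | y = x ∨ G.Adj x y}

/-- A perfect one-error-correcting code: the balls of radius 1 centered at the
vertices of `C` partition the vertex set. -/
def IsPerfectCode {V : Type*} (G : SimpleGraph V) (C : Set V) : Prop :=
  ∀ x : V, ∃! c, c ∈ C ∧ c ∈ ball1 G x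

/-- A perfect bitrade: a pair of disjoint nonempty vertex sets such that every ball of
radius 1 contains exactly one vertex of each, or none of either. -/
def IsPerfectBitrade {V : Type*} (G : SimpleGraph V) (T0 T1 : Set V) : Prop :=
  Disjoint T0 T1 ∧ T0.Nonempty ∧ T1.Nonempty ∧
    ∀ x : V,
      ((∃! y, y ∈ T0 ∧ y ∈ ball1 G x) ∧ (∃! y, y ∈ T1 ∧ y ∈ ball1 G x)) ∨
        (∀ y, y ∈ T0 ∪ T1 → y ∉ ball1 G x)

/-- A spherical bitrade: a pair of disjoint nonempty vertex sets such that every sphere of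
radius 1 contains exactly one vertex of each, or none of either. -/
def IsSphericalBitrade {V : Type*} (G : SimpleGraph V) (S0 S1 : Set V) : Prop :=
  Disjoint S0 S1 ∧ S0.Nonempty ∧ S1.Nonempty ∧
    ∀ x : V,
      ((∃! y, y ∈ S0 ∧ G.Adj x y) ∧ (∃! y, y ∈ S1 ∧ G.Adj x y)) ∨
        (∀ y, y ∈ S0 ∪ S1 → ¬ G.Adj x y)

/-- The Hamming graph `H(n,q)`: vertices are `n`-tuples over an alphabet of size `q`,
adjacent iff they differ in exactly one coordinate. -/
def hammingGraph (n q : ℕ) : SimpleGraph (Fin n → Fin q) where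
  Adj x y := hammingDist x y = 1
  symm := ⟨fun x y (h : hammingDist x y = 1) => by show hammingDist y x = 1; rwa [hammingDist_comm]⟩
  loopless := ⟨fun x (h : hammingDist x x = 1) => by simp [hammingDist_self] at h⟩

/-- `f` is a `μ`-eigenfunction of `G`: `f` is not identically zero and
`μ · f x = ∑_{y ∈ O(x)} f y` for every vertex `x`. -/
def IsEigenfun {V : Type*} (G : SimpleGraph V) (μ : ℝ) (f : V → ℝ) : Prop :=
  f ≠ 0 ∧ ∀ x : V, μ * f x = ∑ᶠ y ∈ G.neighborSet x, f y

/-- The characteristic function of a set of vertices. -/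
noncomputable def chi {V : Type*} (C : Set V) : V → ℝ := Set.indicator C 1

/-- The code `C` has minimum (graph) distance exactly `d`. -/
def HasMinDist {V : Type*} (G : SimpleGraph V) (C : Set V) (d : ℕ) : Prop :=
  (∀ x ∈ C, ∀ y ∈ C, x ≠ y → (d : ℕ∞) ≤ G.edist x y) ∧
    ∃ x ∈ C, ∃ y ∈ C, x ≠ y ∧ G.edist x y = d

/-- The code `C` of `n`-tuples has minimum Hamming distance exactly `d`. -/
def HasMinHDist {n q : ℕ} (C : Set (Fin n → Fin q)) (d : ℕ) : Prop :=
  (∀ x ∈ C, ∀ y ∈ C, x ≠ y → d ≤ hammingDist x y) ∧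
    ∃ x ∈ C, ∃ y ∈ C, x ≠ y ∧ hammingDist x y = d

/-- `G` is distance-regular with intersection numbers `p i j k`. -/
def IsDistRegular {V : Type*} (G : SimpleGraph V) (p : ℕ → ℕ → ℕ → ℕ) : Prop :=
  G.Connected ∧ ∀ (i j k : ℕ) (x y : V), G.edist x y = k →
    {z : V | G.edist x z = i ∧ G.edist z y = j}.ncard = p i j k

open Finset in
section

noncomputable def ee (q : ℕ) (t : ZMod q) : ℂ :=
  Complex.exp (2 * Real.pi * Complex.I / q) ^ t.val

section
variable {q : ℕ}

lemma om_pow_mod (hq : q ≠ 0) (m : ℕ) :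
    Complex.exp (2 * Real.pi * Complex.I / q) ^ m
      = Complex.exp (2 * Real.pi * Complex.I / q) ^ (m % q) := by
  conv_lhs => rw [← Nat.div_add_mod m q]
  rw [pow_add, pow_mul, (Complex.isPrimitiveRoot_exp q hq).pow_eq_one, one_pow, one_mul]

lemma ee_add (hq : q ≠ 0) (s t : ZMod q) : ee q (s + t) = ee q s * ee q t := by
  haveI : NeZero q := ⟨hq⟩
  rw [ee, ee, ee, ← pow_add, ZMod.val_add, ← om_pow_mod hq]

lemma ee_zero (hq : q ≠ 0) : ee q 0 = 1 := by
  haveI : NeZero q := ⟨hq⟩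
  rw [ee, ZMod.val_zero, pow_zero]

lemma ee_ne_one (hq : q ≠ 0) {c : ZMod q} (hc : c ≠ 0) : ee q c ≠ 1 := by
  haveI : NeZero q := ⟨hq⟩
  intro h
  have hdvd := ((Complex.isPrimitiveRoot_exp q hq).pow_eq_one_iff_dvd c.val).mp h
  have hlt := ZMod.val_lt c
  have hv : c.val ≠ 0 := fun h0 => hc (by rwa [← ZMod.val_eq_zero])
  exact absurd (Nat.le_of_dvd (Nat.pos_of_ne_zero hv) hdvd) (not_le.mpr hlt)

lemma char_sum [NeZero q] (c : ZMod q) :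
    ∑ t : ZMod q, ee q (t * c) = if c = 0 then (q : ℂ) else 0 := by
  have hq : q ≠ 0 := NeZero.ne q
  by_cases hc : c = 0
  · simp [hc, ee_zero hq, ZMod.card]
  · simp only [hc, if_false]
    have key : (∑ t : ZMod q, ee q (t * c)) * ee q c = ∑ t : ZMod q, ee q (t * c) := by
      rw [Finset.sum_mul]
      have h1 : ∀ t : ZMod q, ee q (t * c) * ee q c = ee q ((t + 1) * c) := by
        intro t; rw [← ee_add hq]; ring_nf
      simp_rw [h1]
      exact Fintype.sum_bijective (· + 1) (Equiv.addRight (1 : ZMod q)).bijective _ _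
        (fun t => rfl)
    have h2 : (∑ t : ZMod q, ee q (t * c)) * (ee q c - 1) = 0 * (ee q c - 1) := by
      rw [zero_mul, mul_sub, key, mul_one, sub_self]
    exact mul_right_cancel₀ (sub_ne_zero.mpr (ee_ne_one hq hc)) h2

end

noncomputable def chiA {n q : ℕ} (a : Fin n → ZMod q) (x : Fin n → Fin q) : ℂ :=
  ∏ j, ee q (a j * ((x j : ℕ) : ZMod q))

section
variable {q n : ℕ} [NeZero q]

lemma cast_fin_inj : Function.Injective (fun s : Fin q => ((s : ℕ) : ZMod q)) := by
  intro s t h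
  have h2 := congrArg ZMod.val h
  rw [ZMod.val_cast_of_lt s.isLt, ZMod.val_cast_of_lt t.isLt] at h2
  exact Fin.ext h2

lemma chiA_update (a : Fin n → ZMod q) (y : Fin n → Fin q) (j : Fin n) (s : Fin q) :
    chiA a (Function.update y j s)
      = ee q (a j * (((s : ℕ) : ZMod q) - ((y j : ℕ) : ZMod q))) * chiA a y := by
  have hq : q ≠ 0 := NeZero.ne q
  unfold chiA
  rw [← Finset.mul_prod_erase Finset.univ _ (Finset.mem_univ j),
      ← Finset.mul_prod_erase Finset.univ
        (fun i => ee q (a i * ((y i : ℕ) : ZMod q))) (Finset.mem_univ j), ← mul_assoc,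
      ← ee_add hq]
  have h1 : ∀ i ∈ Finset.univ.erase j,
      ee q (a i * ((Function.update y j s i : ℕ) : ZMod q))
        = ee q (a i * ((y i : ℕ) : ZMod q)) := by
    intro i hi
    rw [Function.update_of_ne (Finset.mem_erase.mp hi).1]
  rw [Finset.prod_congr rfl h1, Function.update_self]
  congr 2
  ring

lemma sum_update (a : Fin n → ZMod q) (y : Fin n → Fin q) (j : Fin n) :
    ∑ s ∈ Finset.univ.filter (fun s : Fin q => s ≠ y j), chiA a (Function.update y j s)
      = ((if a j = 0 then (q : ℂ) else 0) - 1) * chiA a y := by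
  have hq : q ≠ 0 := NeZero.ne q
  have hfull : ∑ s : Fin q, chiA a (Function.update y j s)
      = (if a j = 0 then (q : ℂ) else 0) * chiA a y := by
    simp_rw [chiA_update]
    rw [← Finset.sum_mul]
    congr 1
    have hbij : Function.Bijective
        (fun s : Fin q => ((s : ℕ) : ZMod q) - ((y j : ℕ) : ZMod q)) := by
      rw [Fintype.bijective_iff_injective_and_card]
      refine ⟨fun s t h => cast_fin_inj (by linear_combination (norm := module) h), by
        simp [ZMod.card]⟩
    have := Fintype.sum_bijective _ hbij
      (fun s : Fin q => ee q (a j * (((s : ℕ) : ZMod q) - ((y j : ℕ) : ZMod q))))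
      (fun t : ZMod q => ee q (a j * t)) (fun s => rfl)
    rw [this]
    simp_rw [mul_comm (a j)]
    exact char_sum (a j)
  have herase : Finset.univ.filter (fun s : Fin q => s ≠ y j)
      = Finset.univ.erase (y j) := by
    ext s; simp [Finset.mem_erase]
  rw [herase, Finset.sum_erase_eq_sub (Finset.mem_univ (y j)), hfull,
      Function.update_eq_self]
  ring
end

section
variable {q n : ℕ} [NeZero q]

lemma hd_update (y : Fin n → Fin q) (j : Fin n) {s : Fin q} (hs : s ≠ y j) :
    hammingDist (Function.update y j s) y = 1 := by
  unfold hammingDist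
  have : Finset.univ.filter (fun i => Function.update y j s i ≠ y i) = {j} := by
    ext i
    simp only [Finset.mem_filter, Finset.mem_univ, true_and, Finset.mem_singleton]
    constructor
    · intro h
      by_contra hij
      exact h (by rw [Function.update_of_ne hij])
    · rintro rfl
      rw [Function.update_self]; exact hs
  rw [this, Finset.card_singleton]

lemma hd_one (x y : Fin n → Fin q) (h : hammingDist x y = 1) :
    ∃ j : Fin n, x j ≠ y j ∧ x = Function.update y j (x j) := by
  unfold hammingDist at h
  obtain ⟨j, hj⟩ := Finset.card_eq_one.mp h
  have hmem : ∀ i : Fin n, x i ≠ y i ↔ i = j := by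
    intro i
    constructor
    · intro hi
      have : i ∈ Finset.univ.filter (fun i => x i ≠ y i) := by simp [hi]
      rw [hj] at this; exact Finset.mem_singleton.mp this
    · rintro rfl
      have : i ∈ ({i} : Finset (Fin n)) := Finset.mem_singleton_self i
      rw [← hj] at this; exact (Finset.mem_filter.mp this).2
  refine ⟨j, (hmem j).mpr rfl, funext fun i => ?_⟩
  by_cases hij : i = j
  · subst hij; rw [Function.update_self]
  · rw [Function.update_of_ne hij]
    by_contra hne
    exact hij ((hmem i).mp hne)

lemma nbr_sum (a : Fin n → ZMod q) (y : Fin n → Fin q) :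
    (∑ x, if hammingDist x y = 1 then chiA a x else 0)
      = ((q : ℂ) * (Finset.univ.filter fun j => a j = 0).card - n) * chiA a y := by
  rw [Finset.sum_ite, Finset.sum_const_zero, add_zero]
  have hbij : ∑ x ∈ Finset.univ.filter (fun x => hammingDist x y = 1), chiA a x
      = ∑ p ∈ (Finset.univ : Finset (Fin n)).sigma
          (fun j => Finset.univ.filter fun s : Fin q => s ≠ y j),
          chiA a (Function.update y p.1 p.2) := by
    refine (Finset.sum_nbij (fun p => Function.update y p.1 p.2) ?_ ?_ ?_ ?_).symm
    · rintro ⟨j, s⟩ hp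
      simp only [Finset.mem_sigma, Finset.mem_filter] at hp
      simp [hd_update y j hp.2.2]
    · rintro ⟨j, s⟩ hp ⟨j', s'⟩ hp' h
      simp only [Finset.coe_filter, Finset.mem_coe, Finset.mem_sigma, Set.mem_setOf_eq,
        Finset.mem_filter, Finset.mem_univ, true_and] at hp hp'
      have hjj : j = j' := by
        by_contra hne
        have h1 := congrFun h j
        dsimp only at h1
        rw [Function.update_self, Function.update_of_ne hne] at h1
        exact hp (h1 ▸ rfl)
      subst hjj
      have h1 := congrFun h j
      dsimp only at h1
      rw [Function.update_self, Function.update_self] at h1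
      subst h1; rfl
    · intro x hx
      simp only [Finset.coe_filter, Set.mem_setOf_eq, Finset.mem_univ, true_and] at hx
      obtain ⟨j, hne, hx'⟩ := hd_one x y hx
      exact ⟨⟨j, x j⟩, by simp [hne], hx'.symm⟩
    · intro p hp; rfl
  rw [hbij, Finset.sum_sigma]
  simp_rw [sum_update a y]
  rw [← Finset.sum_mul]
  congr 1
  rw [Finset.sum_sub_distrib, Finset.sum_const, Finset.sum_ite, Finset.sum_const_zero,
    add_zero, Finset.sum_const]
  simp [mul_comm]
end

section
variable {q n : ℕ} [NeZero q]

lemma exists_a (f : (Fin n → Fin q) → ℂ) (hf : f ≠ 0) :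
    ∃ a : Fin n → ZMod q, ∑ x, chiA a x * f x ≠ 0 := by
  have hq : q ≠ 0 := NeZero.ne q
  by_contra hc
  push_neg at hc
  apply hf
  funext x0
  have hS : ∑ a : Fin n → ZMod q,
      (∏ j, ee q (- a j * ((x0 j : ℕ) : ZMod q))) * (∑ x, chiA a x * f x) = 0 := by
    simp only [hc, mul_zero, Finset.sum_const_zero]
  have hS2 : ∑ a : Fin n → ZMod q,
      (∏ j, ee q (- a j * ((x0 j : ℕ) : ZMod q))) * (∑ x, chiA a x * f x)
      = ∑ x, f x * ∏ j, (if ((x j : ℕ) : ZMod q) - ((x0 j : ℕ) : ZMod q) = 0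
          then (q : ℂ) else 0) := by
    have step1 : ∀ a : Fin n → ZMod q,
        (∏ j, ee q (- a j * ((x0 j : ℕ) : ZMod q))) * (∑ x, chiA a x * f x)
        = ∑ x, f x * ∏ j, ee q (a j * (((x j : ℕ) : ZMod q) - ((x0 j : ℕ) : ZMod q))) := by
      intro a
      rw [Finset.mul_sum]
      refine Finset.sum_congr rfl fun x _ => ?_
      unfold chiA
      rw [← mul_assoc, ← Finset.prod_mul_distrib]
      have : ∀ j, ee q (- a j * ((x0 j : ℕ) : ZMod q)) * ee q (a j * ((x j : ℕ) : ZMod q))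
          = ee q (a j * (((x j : ℕ) : ZMod q) - ((x0 j : ℕ) : ZMod q))) := by
        intro j
        rw [← ee_add hq]
        congr 1
        ring
      rw [Finset.prod_congr rfl (fun j _ => this j)]
      ring
    simp_rw [step1]
    rw [Finset.sum_comm]
    refine Finset.sum_congr rfl fun x _ => ?_
    rw [← Finset.mul_sum]
    congr 1
    have := Finset.sum_prod_piFinset (Finset.univ : Finset (ZMod q))
      (fun j (t : ZMod q) => ee q (t * (((x j : ℕ) : ZMod q) - ((x0 j : ℕ) : ZMod q))))
    rw [Fintype.piFinset_univ] at this
    rw [this]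
    exact Finset.prod_congr rfl fun j _ => char_sum _
  rw [hS2] at hS
  have hprod : ∀ x : Fin n → Fin q,
      (∏ j, (if ((x j : ℕ) : ZMod q) - ((x0 j : ℕ) : ZMod q) = 0 then (q : ℂ) else 0))
        = if x = x0 then (q : ℂ) ^ n else 0 := by
    intro x
    by_cases hx : x = x0
    · subst hx
      simp
    · rw [if_neg hx]
      obtain ⟨j, hj⟩ : ∃ j, x j ≠ x0 j := by
        by_contra hall
        push_neg at hall
        exact hx (funext hall)
      refine Finset.prod_eq_zero (Finset.mem_univ j) ?_
      rw [if_neg]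
      intro h0
      exact hj (cast_fin_inj (sub_eq_zero.mp h0))
  simp_rw [hprod] at hS
  have : ∑ x, f x * (if x = x0 then (q : ℂ) ^ n else 0)
      = f x0 * (q : ℂ) ^ n := by
    rw [Finset.sum_eq_single x0]
    · simp
    · intro b _ hb; simp [hb]
    · intro h; exact absurd (Finset.mem_univ x0) h
  rw [this] at hS
  have hqn : ((q : ℂ)) ^ n ≠ 0 := pow_ne_zero n (Nat.cast_ne_zero.mpr hq)
  exact (mul_eq_zero.mp hS).resolve_right hqn

lemma key_spec (f : (Fin n → Fin q) → ℂ) (hf : f ≠ 0) (μ : ℂ)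
    (hAf : ∀ x, (∑ y, if hammingDist x y = 1 then f y else 0) = μ * f x) :
    ∃ z : ℕ, z ≤ n ∧ μ = (q : ℂ) * z - n := by
  obtain ⟨a, ha⟩ := exists_a f hf
  set z : ℕ := (Finset.univ.filter fun j => a j = 0).card with hz
  refine ⟨z, le_trans (Finset.card_filter_le _ _) (by simp), ?_⟩
  have h1 : ∑ x, chiA a x * (∑ y, if hammingDist x y = 1 then f y else 0)
      = μ * ∑ x, chiA a x * f x := by
    simp_rw [hAf]
    rw [Finset.mul_sum]
    exact Finset.sum_congr rfl fun x _ => by ring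
  have h2 : ∑ x, chiA a x * (∑ y, if hammingDist x y = 1 then f y else 0)
      = ((q : ℂ) * z - n) * ∑ x, chiA a x * f x := by
    have swap1 : ∑ x, chiA a x * (∑ y, if hammingDist x y = 1 then f y else 0)
        = ∑ y, (∑ x, if hammingDist x y = 1 then chiA a x else 0) * f y := by
      simp_rw [Finset.mul_sum, Finset.sum_mul]
      rw [Finset.sum_comm]
      refine Finset.sum_congr rfl fun y _ => Finset.sum_congr rfl fun x _ => ?_
      split_ifs with h
      · ring
      · ring
    rw [swap1]
    simp_rw [nbr_sum a]
    rw [Finset.mul_sum]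
    refine Finset.sum_congr rfl fun y _ => by rw [← hz]; ring
  exact mul_right_cancel₀ ha (h1.symm.trans h2)
end

lemma sum_eu {V : Type*} [Fintype V] (P : V → Prop) [DecidablePred P] (h : ∃! y, P y) :
    (∑ y, if P y then (1 : ℂ) else 0) = 1 := by
  obtain ⟨y0, hy0, hun⟩ := h
  rw [Finset.sum_eq_single y0]
  · simp [hy0]
  · intro b _ hb
    simp only [ite_eq_right_iff]
    intro hPb; exact absurd (hun b hPb) hb
  · intro h; exact absurd (Finset.mem_univ y0) h

lemma spherical_case (q n : ℕ) (hq : 3 ≤ q) (hn : 2 ≤ n)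
    (S0 S1 : Set (Fin n → Fin q))
    (hdisj : Disjoint S0 S1) (hne0 : S0.Nonempty) (hne1 : S1.Nonempty)
    (hcond : ∀ x, ((∃! y, y ∈ S0 ∧ (hammingGraph n q).Adj x y) ∧
        (∃! y, y ∈ S1 ∧ (hammingGraph n q).Adj x y)) ∨
        (∀ y, y ∈ S0 ∪ S1 → ¬ (hammingGraph n q).Adj x y)) : q ∣ n := by
  classical
  haveI : NeZero q := ⟨by omega⟩
  set f : (Fin n → Fin q) → ℂ :=
    fun x => (if x ∈ S0 then (1 : ℂ) else 0) - (if x ∈ S1 then 1 else 0) with hfdef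
  obtain ⟨x0, hx0⟩ := hne0
  have hf : f ≠ 0 := by
    intro h
    have h2 := congrFun h x0
    have hx1 : x0 ∉ S1 := Set.disjoint_left.mp hdisj hx0
    simp [hfdef, hx0, hx1] at h2
  have hsplit : ∀ x, (∑ y, if hammingDist x y = 1 then f y else 0)
      = (∑ y, if y ∈ S0 ∧ hammingDist x y = 1 then (1 : ℂ) else 0)
        - (∑ y, if y ∈ S1 ∧ hammingDist x y = 1 then (1 : ℂ) else 0) := by
    intro x
    rw [← Finset.sum_sub_distrib]
    refine Finset.sum_congr rfl fun y _ => ?_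
    by_cases hd : hammingDist x y = 1 <;> by_cases h0 : y ∈ S0 <;> by_cases h1 : y ∈ S1 <;>
      simp [hfdef, hd, h0, h1]
  have hAf : ∀ x, (∑ y, if hammingDist x y = 1 then f y else 0) = (0 : ℂ) * f x := by
    intro x
    rw [zero_mul, hsplit x]
    rcases hcond x with ⟨h0, h1⟩ | hnone
    · rw [sum_eu (fun y => y ∈ S0 ∧ hammingDist x y = 1) h0,
        sum_eu (fun y => y ∈ S1 ∧ hammingDist x y = 1) h1, sub_self]
    · rw [Finset.sum_eq_zero, Finset.sum_eq_zero, sub_self]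
      · intro y _
        rw [if_neg]
        rintro ⟨hy, hd⟩
        exact hnone y (Set.mem_union_right _ hy) hd
      · intro y _
        rw [if_neg]
        rintro ⟨hy, hd⟩
        exact hnone y (Set.mem_union_left _ hy) hd
  obtain ⟨z, hzn, hz⟩ := key_spec f hf 0 hAf
  have : (q : ℂ) * z = n := by linear_combination -hz
  have hnat : q * z = n := by exact_mod_cast this
  exact ⟨z, hnat.symm⟩

lemma perfect_case (q n : ℕ) (hq : 3 ≤ q) (hn : 2 ≤ n)
    (T0 T1 : Set (Fin n → Fin q))
    (hdisj : Disjoint T0 T1) (hne0 : T0.Nonempty) (hne1 : T1.Nonempty)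
    (hcond : ∀ x, ((∃! y, y ∈ T0 ∧ y ∈ ball1 (hammingGraph n q) x) ∧
        (∃! y, y ∈ T1 ∧ y ∈ ball1 (hammingGraph n q) x)) ∨
        (∀ y, y ∈ T0 ∪ T1 → y ∉ ball1 (hammingGraph n q) x)) : n % q = 1 := by
  classical
  haveI : NeZero q := ⟨by omega⟩
  set f : (Fin n → Fin q) → ℂ :=
    fun x => (if x ∈ T0 then (1 : ℂ) else 0) - (if x ∈ T1 then 1 else 0) with hfdef
  obtain ⟨x0, hx0⟩ := hne0
  have hf : f ≠ 0 := by
    intro h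
    have h2 := congrFun h x0
    have hx1 : x0 ∉ T1 := Set.disjoint_left.mp hdisj hx0
    simp [hfdef, hx0, hx1] at h2
  have hball : ∀ x, (∑ y, if (y = x ∨ hammingDist x y = 1) then f y else 0)
      = f x + ∑ y, if hammingDist x y = 1 then f y else 0 := by
    intro x
    have : ∀ y : Fin n → Fin q, (if (y = x ∨ hammingDist x y = 1) then f y else 0)
        = (if y = x then f y else 0) + (if hammingDist x y = 1 then f y else 0) := by
      intro y
      by_cases hy : y = x
      · subst hy
        simp [hammingDist_self]
      · by_cases hd : hammingDist x y = 1 <;> simp [hy, hd]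
    simp_rw [this]
    rw [Finset.sum_add_distrib]
    congr 1
    rw [Finset.sum_eq_single x]
    · simp
    · intro b _ hb; simp [hb]
    · intro h; exact absurd (Finset.mem_univ x) h
  have hsplit : ∀ x, (∑ y, if (y = x ∨ hammingDist x y = 1) then f y else 0)
      = (∑ y, if y ∈ T0 ∧ (y = x ∨ hammingDist x y = 1) then (1 : ℂ) else 0)
        - (∑ y, if y ∈ T1 ∧ (y = x ∨ hammingDist x y = 1) then (1 : ℂ) else 0) := by
    intro x
    rw [← Finset.sum_sub_distrib]
    refine Finset.sum_congr rfl fun y _ => ?_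
    by_cases hd : (y = x ∨ hammingDist x y = 1) <;> by_cases h0 : y ∈ T0 <;>
      by_cases h1 : y ∈ T1 <;> simp [hfdef, hd, h0, h1]
  have hAf : ∀ x, (∑ y, if hammingDist x y = 1 then f y else 0) = (-1 : ℂ) * f x := by
    intro x
    have hzero : (∑ y, if (y = x ∨ hammingDist x y = 1) then f y else 0) = 0 := by
      rw [hsplit x]
      rcases hcond x with ⟨h0, h1⟩ | hnone
      · rw [sum_eu (fun y => y ∈ T0 ∧ (y = x ∨ hammingDist x y = 1)) h0,
          sum_eu (fun y => y ∈ T1 ∧ (y = x ∨ hammingDist x y = 1)) h1, sub_self]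
      · rw [Finset.sum_eq_zero, Finset.sum_eq_zero, sub_self]
        · intro y _
          rw [if_neg]
          rintro ⟨hy, hd⟩
          exact hnone y (Set.mem_union_right _ hy) hd
        · intro y _
          rw [if_neg]
          rintro ⟨hy, hd⟩
          exact hnone y (Set.mem_union_left _ hy) hd
    have := hball x
    rw [hzero] at this
    linear_combination -this
  obtain ⟨z, hzn, hz⟩ := key_spec f hf (-1) hAf
  have : (n : ℂ) = (q : ℂ) * z + 1 := by linear_combination hz
  have hnat : n = q * z + 1 := by exact_mod_cast this
  rw [hnat, Nat.mul_add_mod]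
  exact Nat.mod_eq_of_lt (by omega)

end

/-- For `q ≥ 3`, `n ≥ 2`: if a (nonempty) spherical bitrade exists in `H(n,q)`
then `q ∣ n`, and if a (nonempty) perfect bitrade exists in `H(n,q)` then `n ≡ 1 (mod q)`. -/
theorem statement7 (q n : ℕ) (hq : 3 ≤ q) (hn : 2 ≤ n) :
    ((∃ S0 S1 : Set (Fin n → Fin q), IsSphericalBitrade (hammingGraph n q) S0 S1) →
      q ∣ n) ∧
    ((∃ T0 T1 : Set (Fin n → Fin q), IsPerfectBitrade (hammingGraph n q) T0 T1) →
      n % q = 1) := by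
  constructor
  · rintro ⟨S0, S1, hdisj, hne0, hne1, hcond⟩
    exact spherical_case q n hq hn S0 S1 hdisj hne0 hne1 hcond
  · rintro ⟨T0, T1, hdisj, hne0, hne1, hcond⟩
    exact perfect_case q n hq hn T0 T1 hdisj hne0 hne1 hcond
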